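/- Fix a time t and N agents. For each i let Ω_i ⊆ ℝ^{d_i} be a nonempty closed convex set with ‖x‖ ≤ η for all x ∈ Ω_i, let f_{i,t} : ℝ^{d_i} → ℝ and g_{i,t} : ℝ^{d_i} → ℝⁿ be convex (each component of g_{i,t} convex) and differentiable with ‖∇f_{i,t}(x)‖ ≤ C₂ and ‖∇g_{i,t}(x)‖ ≤ C₂ (operator norm of the n×d_i Jacobian) for all x ∈ Ω_i. Let x_{i,t} ∈ Ω_i, let μ_{i,t} ∈ ℝⁿ with μ_{i,t} ≥ 0 componentwise, set λ̄_t = (1/N)Σ_{i=1}^N μ_{i,t} (so λ̄_t ≥ 0), and let x_{i,t+1} = P_{Ω_i}[ x_{i,t} − α_t ( ∇f_{i,t}(x_{i,t}) + ∇g_{i,t}(x_{i,t})ᵀ μ_{i,t} ) ] be the Euclidean projection, with α_t > 0. Let x*_{i,t}, x*_{i,t+1} ∈ Ω_i be arbitrary. Define L_t(x, λ) = Σ_{i=1}^N f_{i,t}(x_i) + λᵀ Σ_{i=1}^N g_{i,t}(x_i) − (γ_t/2)‖λ‖² for λ ∈ ℝⁿ. Then, writing x_t = (x_{1,t},…,x_{N,t})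 and x*_t = (x*_{1,t},…,x*_{N,t}): L_t(x_t, λ̄_t) − L_t(x*_t, λ̄_t) ≤ (1/(2α_t)) Σ_{i=1}^N ( ‖x_{i,t} − x*_{i,t}‖² − ‖x_{i,t+1} − x*_{i,t+1}‖² ) + 2ηC₂ Σ_{i=1}^N ‖μ_{i,t} − λ̄_t‖ + Σ_{i=1}^N ( 3η/α_t + C₂(1 + ‖μ_{i,t}‖) ) ‖x*_{i,t} − x*_{i,t+1}‖ + α_t C₂² Σ_{i=1}^N ( 1 + ‖μ_{i,t}‖² ). -/

import Mathlib

set_option maxHeartbeats 1000000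

open Set ContinuousLinearMap
open scoped RealInnerProductSpace

lemma grad_ineq {E : Type*} [NormedAddCommGroup E] [NormedSpace ℝ E]
    {φ : E → ℝ} {D : E →L[ℝ] ℝ} {x y : E}
    (hφ : ConvexOn ℝ Set.univ φ) (hD : HasFDerivAt φ D x) :
    φ x + D (y - x) ≤ φ y := by
  have hline : HasDerivAt (fun t : ℝ => x + t • (y - x)) (y - x) 0 := by
    simpa using ((hasDerivAt_id (0:ℝ)).smul_const (y - x)).const_add x
  have hcomp : HasDerivAt (fun t : ℝ => φ (x + t • (y - x))) (D (y - x)) 0 := by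
    have h0 : HasFDerivAt φ D ((fun t : ℝ => x + t • (y - x)) 0) := by simpa using hD
    exact h0.comp_hasDerivAt 0 hline
  have hconv2 : ConvexOn ℝ Set.univ (fun t : ℝ => φ (x + t • (y - x))) := by
    have h := hφ.comp_affineMap (AffineMap.lineMap x y)
    have : (fun t : ℝ => φ (x + t • (y - x))) = φ ∘ (AffineMap.lineMap x y) := by
      funext t
      simp [AffineMap.lineMap_apply, add_comm]
    rw [this]
    simpa using h
  have hs := hconv2.le_slope_of_hasDerivAt (Set.mem_univ (0:ℝ)) (Set.mem_univ (1:ℝ))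
    zero_lt_one hcomp
  rw [slope_def_field] at hs
  simp at hs
  rw [map_sub]
  linarith

lemma step_bound {m n : ℕ} {Ω : Set (EuclideanSpace ℝ (Fin m))}
    (hconv : Convex ℝ Ω)
    {η C₂ α : ℝ} (hη : 0 < η) (hC₂ : 0 < C₂) (hα : 0 < α)
    (hbd : ∀ w ∈ Ω, ‖w‖ ≤ η)
    {f : EuclideanSpace ℝ (Fin m) → ℝ}
    {g : EuclideanSpace ℝ (Fin m) → EuclideanSpace ℝ (Fin n)}
    {f' : EuclideanSpace ℝ (Fin m)}
    {G : EuclideanSpace ℝ (Fin m) → (EuclideanSpace ℝ (Fin m) →L[ℝ] EuclideanSpace ℝ (Fin n))}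
    (hfc : ConvexOn ℝ Set.univ f)
    (hgc : ∀ k : Fin n, ConvexOn ℝ Set.univ (fun w => g w k))
    {x p s s' : EuclideanSpace ℝ (Fin m)}
    (hf' : HasGradientAt f f' x)
    (hg' : ∀ w, HasFDerivAt g (G w) w)
    (hf'bd : ‖f'‖ ≤ C₂)
    (hGbd : ∀ w ∈ Ω, ‖G w‖ ≤ C₂)
    (hx : x ∈ Ω) (hs : s ∈ Ω) (hs' : s' ∈ Ω) (hp : p ∈ Ω)
    {μ lb : EuclideanSpace ℝ (Fin n)} (hμ : ∀ k, 0 ≤ μ k)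
    (hmin : ∀ w ∈ Ω, ‖(x - α • (f' + ContinuousLinearMap.adjoint (G x) μ)) - p‖ ≤
      ‖(x - α • (f' + ContinuousLinearMap.adjoint (G x) μ)) - w‖) :
    f x - f s + ⟪lb, g x⟫ - ⟪lb, g s⟫ ≤
      1 / (2 * α) * (‖x - s‖ ^ 2 - ‖p - s'‖ ^ 2)
      + 2 * η * C₂ * ‖μ - lb‖
      + (3 * η / α + C₂ * (1 + ‖μ‖)) * ‖s - s'‖
      + α * C₂ ^ 2 * (1 + ‖μ‖ ^ 2) := by
  set a : EuclideanSpace ℝ (Fin m) := f' + ContinuousLinearMap.adjoint (G x) μ with ha_def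
  -- norm bounds from Ω
  have hxs2 : ‖x - s‖ ≤ 2 * η := by
    calc ‖x - s‖ ≤ ‖x‖ + ‖s‖ := norm_sub_le _ _
    _ ≤ 2 * η := by have := hbd x hx; have := hbd s hs; linarith
  have hss'2 : ‖s - s'‖ ≤ 2 * η := by
    calc ‖s - s'‖ ≤ ‖s‖ + ‖s'‖ := norm_sub_le _ _
    _ ≤ 2 * η := by have := hbd s hs; have := hbd s' hs'; linarith
  -- (1) convexity of f
  have hf_ineq : f x - f s ≤ ⟪f', x - s⟫ := by
    have h := grad_ineq hfc ((hasGradientAt_iff_hasFDerivAt).mp hf') (y := s)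
    simp only [InnerProductSpace.toDual_apply_apply] at h
    have e1 : ⟪f', x - s⟫ = ⟪f', x⟫ - ⟪f', s⟫ := inner_sub_right _ _ _
    have e2 : ⟪f', s - x⟫ = ⟪f', s⟫ - ⟪f', x⟫ := inner_sub_right _ _ _
    linarith
  -- (2) convexity of g components
  have hg_ineq : ⟪μ, g x - g s⟫ ≤ ⟪ContinuousLinearMap.adjoint (G x) μ, x - s⟫ := by
    rw [ContinuousLinearMap.adjoint_inner_left]
    have hcomp : ∀ k : Fin n, g x k - g s k ≤ (G x) (x - s) k := by
      intro k
      have hDk : HasFDerivAt (fun w => g w k) ((EuclideanSpace.proj k).comp (G x)) x := by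
        exact (EuclideanSpace.proj k).hasFDerivAt.comp x (hg' x)
      have h := grad_ineq (hgc k) hDk (y := s)
      have hmap : (G x) (x - s) = -((G x) (s - x)) := by
        rw [← map_neg, neg_sub]
      simp only [ContinuousLinearMap.comp_apply] at h
      have hpk : ∀ v : EuclideanSpace ℝ (Fin n), (EuclideanSpace.proj k : _ →L[ℝ] ℝ) v = v k :=
        fun v => rfl
      rw [hpk] at h
      have : ((G x) (x - s)) k = -(((G x) (s - x)) k) := by rw [hmap]; rfl
      rw [this]
      linarith
    simp only [PiLp.inner_apply, RCLike.inner_apply, conj_trivial]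
    apply Finset.sum_le_sum
    intro k _
    have : (g x - g s) k = g x k - g s k := rfl
    rw [this]
    exact mul_le_mul_of_nonneg_right (hcomp k) (hμ k)
  -- (3) Lipschitz bound for g and cross term
  have hLip : ‖g x - g s‖ ≤ C₂ * ‖x - s‖ := by
    have := Convex.norm_image_sub_le_of_norm_hasFDerivWithin_le
      (f := g) (f' := G) (fun w hw => (hg' w).hasFDerivWithinAt) hGbd hconv hs hx
    simpa using this
  have hcross : ⟪lb - μ, g x - g s⟫ ≤ 2 * η * C₂ * ‖μ - lb‖ := by
    calc ⟪lb - μ, g x - g s⟫ ≤ ‖lb - μ‖ * ‖g x - g s‖ := real_inner_le_norm _ _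
    _ ≤ ‖lb - μ‖ * (C₂ * (2 * η)) := by
        apply mul_le_mul_of_nonneg_left _ (norm_nonneg _)
        calc ‖g x - g s‖ ≤ C₂ * ‖x - s‖ := hLip
        _ ≤ C₂ * (2 * η) := mul_le_mul_of_nonneg_left hxs2 hC₂.le
    _ = 2 * η * C₂ * ‖μ - lb‖ := by rw [norm_sub_rev]; ring
  -- (4) norm bound on a
  have ha_bd : ‖a‖ ≤ C₂ * (1 + ‖μ‖) := by
    have h1 : ‖ContinuousLinearMap.adjoint (G x) μ‖ ≤ C₂ * ‖μ‖ := by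
      calc ‖ContinuousLinearMap.adjoint (G x) μ‖
          ≤ ‖ContinuousLinearMap.adjoint (G x)‖ * ‖μ‖ := ContinuousLinearMap.le_opNorm _ _
      _ = ‖G x‖ * ‖μ‖ := by rw [LinearIsometryEquiv.norm_map]
      _ ≤ C₂ * ‖μ‖ := mul_le_mul_of_nonneg_right (hGbd x hx) (norm_nonneg μ)
    calc ‖a‖ ≤ ‖f'‖ + ‖ContinuousLinearMap.adjoint (G x) μ‖ := norm_add_le _ _
    _ ≤ C₂ + C₂ * ‖μ‖ := add_le_add hf'bd h1
    _ = C₂ * (1 + ‖μ‖) := by ring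
  -- (5) variational inequality for the projection
  have hVI : ⟪(x - α • a) - p, s' - p⟫ ≤ 0 := by
    haveI : Nonempty Ω := ⟨⟨p, hp⟩⟩
    have hbdd : BddBelow (Set.range fun w : Ω => ‖(x - α • a) - w‖) := by
      refine ⟨0, ?_⟩
      rintro b ⟨w, rfl⟩
      exact norm_nonneg _
    have heq : ‖(x - α • a) - p‖ = ⨅ w : Ω, ‖(x - α • a) - w‖ := by
      apply le_antisymm
      · exact le_ciInf (fun w => hmin w w.2)
      · exact ciInf_le hbdd ⟨p, hp⟩
    exact (norm_eq_iInf_iff_real_inner_le_zero hconv hp).mp heq s' hs'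
  -- (6) core quadratic estimate
  have hquad : 2 * α * ⟪a, x - s'⟫ ≤ ‖x - s'‖ ^ 2 - ‖p - s'‖ ^ 2 + α ^ 2 * ‖a‖ ^ 2 := by
    set u := x - p with hu
    set v := x - s' with hv
    have h1 : ⟪u - α • a, u - v⟫ ≤ 0 := by
      have e : (x - α • a) - p = u - α • a := by rw [hu]; abel
      have e2 : s' - p = u - v := by rw [hu, hv]; abel
      rw [← e, ← e2]; exact hVI
    have e3 : ⟪u - α • a, u - v⟫ = ⟪u, u - v⟫ - α * ⟪a, u - v⟫ := by
      rw [inner_sub_left, real_inner_smul_left]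
    have e4 : ⟪u, u - v⟫ = ‖u‖ ^ 2 - ⟪u, v⟫ := by
      rw [inner_sub_right, real_inner_self_eq_norm_sq]
    have e5 : ⟪a, u - v⟫ = ⟪a, u⟫ - ⟪a, v⟫ := inner_sub_right _ _ _
    have e6 : ‖u - v‖ ^ 2 = ‖u‖ ^ 2 - 2 * ⟪u, v⟫ + ‖v‖ ^ 2 := norm_sub_sq_real u v
    have e7 : ⟪a, u⟫ ≤ ‖a‖ * ‖u‖ := real_inner_le_norm _ _
    have e8 : ‖p - s'‖ = ‖u - v‖ := by rw [hu, hv, ← norm_neg]; congr 1; abel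
    rw [e8]
    nlinarith [sq_nonneg (α * ‖a‖ - ‖u‖), sq_nonneg (‖u - v‖)]
  -- (7) substitute ‖x - s'‖² bound
  have hv2 : ‖x - s'‖ ^ 2 ≤ ‖x - s‖ ^ 2 + 6 * η * ‖s - s'‖ := by
    have htri : ‖x - s'‖ ≤ ‖x - s‖ + ‖s - s'‖ := by
      have : x - s' = (x - s) + (s - s') := by abel
      rw [this]; exact norm_add_le _ _
    nlinarith [norm_nonneg (x - s'), norm_nonneg (x - s), norm_nonneg (s - s'),
      mul_self_le_mul_self (norm_nonneg (x - s')) htri]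
  -- (8) assemble
  have hsplit : ⟪lb, g x⟫ - ⟪lb, g s⟫ = ⟪μ, g x - g s⟫ + ⟪lb - μ, g x - g s⟫ := by
    rw [← inner_add_left]
    simp [inner_sub_right]
  have hadd : ⟪f', x - s⟫ + ⟪ContinuousLinearMap.adjoint (G x) μ, x - s⟫ = ⟪a, x - s⟫ := by
    rw [ha_def, inner_add_left]
  have hshift : ⟪a, x - s⟫ = ⟪a, x - s'⟫ + ⟪a, s' - s⟫ := by
    rw [← inner_add_right]; congr 1; abel
  have hlast : ⟪a, s' - s⟫ ≤ C₂ * (1 + ‖μ‖) * ‖s - s'‖ := by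
    calc ⟪a, s' - s⟫ ≤ ‖a‖ * ‖s' - s‖ := real_inner_le_norm _ _
    _ = ‖a‖ * ‖s - s'‖ := by rw [norm_sub_rev]
    _ ≤ C₂ * (1 + ‖μ‖) * ‖s - s'‖ := mul_le_mul_of_nonneg_right ha_bd (norm_nonneg _)
  have hsq : α ^ 2 * ‖a‖ ^ 2 ≤ 2 * α * (α * C₂ ^ 2 * (1 + ‖μ‖ ^ 2)) := by
    have h1 : ‖a‖ ^ 2 ≤ (C₂ * (1 + ‖μ‖)) ^ 2 := by
      nlinarith [norm_nonneg a, norm_nonneg μ, ha_bd]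
    nlinarith [sq_nonneg (1 - ‖μ‖), sq_nonneg α, hα.le, hC₂.le, sq_nonneg C₂, sq_nonneg (α * C₂)]
  have hmain : ⟪a, x - s'⟫ ≤
      1 / (2 * α) * (‖x - s‖ ^ 2 - ‖p - s'‖ ^ 2) + 3 * η / α * ‖s - s'‖
        + α * C₂ ^ 2 * (1 + ‖μ‖ ^ 2) := by
    have h2α : (0:ℝ) < 2 * α := by linarith
    rw [show 1 / (2 * α) * (‖x - s‖ ^ 2 - ‖p - s'‖ ^ 2) + 3 * η / α * ‖s - s'‖
        + α * C₂ ^ 2 * (1 + ‖μ‖ ^ 2)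
        = (‖x - s‖ ^ 2 - ‖p - s'‖ ^ 2 + 6 * η * ‖s - s'‖
            + 2 * α * (α * C₂ ^ 2 * (1 + ‖μ‖ ^ 2))) / (2 * α) from by
      field_simp; ring]
    rw [le_div_iff₀ h2α]
    nlinarith [hquad, hv2, hsq]
  linarith [hf_ineq, hg_ineq, hcross, hlast, hmain, hsplit.le, hsplit.ge]


/-- One-step primal inequality for the regularized Lagrangian
`L_t(x, λ) = ∑_i f_{i,t}(x_i) + λᵀ ∑_i g_{i,t}(x_i) − (γ_t/2)‖λ‖²`: if
`x_{i,t+1} = P_{Ω_i}[x_{i,t} − α_t(∇f_{i,t}(x_{i,t}) + ∇g_{i,t}(x_{i,t})ᵀ μ_{i,t})]` and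
`λ̄_t = (1/N) ∑_i μ_{i,t}` with `μ_{i,t} ≥ 0`, then
`L_t(x_t, λ̄_t) − L_t(x*_t, λ̄_t)` is bounded by the stated sum of four terms. -/
theorem stmt_8 (N n : ℕ) (hN : 0 < N)
    (d : Fin N → ℕ)
    (Ω : ∀ i : Fin N, Set (EuclideanSpace ℝ (Fin (d i))))
    (hΩ_ne : ∀ i, (Ω i).Nonempty)
    (hΩ_closed : ∀ i, IsClosed (Ω i))
    (hΩ_convex : ∀ i, Convex ℝ (Ω i))
    (η C₂ α γ : ℝ) (hη : 0 < η) (hC₂ : 0 < C₂) (hα : 0 < α) (hγ : 0 < γ)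
    (hΩ_bd : ∀ i, ∀ w ∈ Ω i, ‖w‖ ≤ η)
    (f : ∀ i : Fin N, EuclideanSpace ℝ (Fin (d i)) → ℝ)
    (g : ∀ i : Fin N, EuclideanSpace ℝ (Fin (d i)) → EuclideanSpace ℝ (Fin n))
    (f' : ∀ i : Fin N, EuclideanSpace ℝ (Fin (d i)) → EuclideanSpace ℝ (Fin (d i)))
    (g' : ∀ i : Fin N, EuclideanSpace ℝ (Fin (d i)) →
      (EuclideanSpace ℝ (Fin (d i)) →L[ℝ] EuclideanSpace ℝ (Fin n)))
    (hf_convex : ∀ i, ConvexOn ℝ Set.univ (f i))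
    (hg_convex : ∀ i (k : Fin n), ConvexOn ℝ Set.univ (fun w => g i w k))
    (hf' : ∀ i w, HasGradientAt (f i) (f' i w) w)
    (hg' : ∀ i w, HasFDerivAt (g i) (g' i w) w)
    (hf'_bd : ∀ i, ∀ w ∈ Ω i, ‖f' i w‖ ≤ C₂)
    (hg'_bd : ∀ i, ∀ w ∈ Ω i, ‖g' i w‖ ≤ C₂)
    (x xnext xstar xstarnext : ∀ i : Fin N, EuclideanSpace ℝ (Fin (d i)))
    (hx : ∀ i, x i ∈ Ω i)
    (hxstar : ∀ i, xstar i ∈ Ω i)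
    (hxstarnext : ∀ i, xstarnext i ∈ Ω i)
    (μ : Fin N → EuclideanSpace ℝ (Fin n))
    (hμ_nonneg : ∀ i (k : Fin n), 0 ≤ μ i k)
    -- `xnext i` is the Euclidean projection of the gradient step onto `Ω i`
    (hproj : ∀ i, xnext i ∈ Ω i ∧ ∀ w ∈ Ω i,
      ‖(x i - α • (f' i (x i) + ContinuousLinearMap.adjoint (g' i (x i)) (μ i))) - xnext i‖ ≤
      ‖(x i - α • (f' i (x i) + ContinuousLinearMap.adjoint (g' i (x i)) (μ i))) - w‖) :
    ((∑ i, f i (x i)) + (inner ℝ ((N : ℝ)⁻¹ • ∑ i, μ i) (∑ i, g i (x i)) : ℝ)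
        - γ / 2 * ‖(N : ℝ)⁻¹ • ∑ i, μ i‖ ^ 2)
      - ((∑ i, f i (xstar i)) + (inner ℝ ((N : ℝ)⁻¹ • ∑ i, μ i) (∑ i, g i (xstar i)) : ℝ)
        - γ / 2 * ‖(N : ℝ)⁻¹ • ∑ i, μ i‖ ^ 2) ≤
      1 / (2 * α) * ∑ i, (‖x i - xstar i‖ ^ 2 - ‖xnext i - xstarnext i‖ ^ 2)
      + 2 * η * C₂ * ∑ i, ‖μ i - (N : ℝ)⁻¹ • ∑ j, μ j‖
      + ∑ i, (3 * η / α + C₂ * (1 + ‖μ i‖)) * ‖xstar i - xstarnext i‖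
      + α * C₂ ^ 2 * ∑ i, (1 + ‖μ i‖ ^ 2) := by
  set lb : EuclideanSpace ℝ (Fin n) := (N : ℝ)⁻¹ • ∑ i, μ i with hlb
  have key : ∀ i : Fin N,
      f i (x i) - f i (xstar i) + ⟪lb, g i (x i)⟫ - ⟪lb, g i (xstar i)⟫ ≤
        1 / (2 * α) * (‖x i - xstar i‖ ^ 2 - ‖xnext i - xstarnext i‖ ^ 2)
        + 2 * η * C₂ * ‖μ i - lb‖
        + (3 * η / α + C₂ * (1 + ‖μ i‖)) * ‖xstar i - xstarnext i‖
        + α * C₂ ^ 2 * (1 + ‖μ i‖ ^ 2) := by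
    intro i
    exact step_bound (hΩ_convex i) hη hC₂ hα (hΩ_bd i) (hf_convex i) (hg_convex i)
      (hf' i (x i)) (hg' i) (hf'_bd i _ (hx i)) (hg'_bd i) (hx i) (hxstar i) (hxstarnext i)
      (hproj i).1 (hμ_nonneg i) (hproj i).2
  calc ((∑ i, f i (x i)) + ⟪lb, ∑ i, g i (x i)⟫ - γ / 2 * ‖lb‖ ^ 2)
        - ((∑ i, f i (xstar i)) + ⟪lb, ∑ i, g i (xstar i)⟫ - γ / 2 * ‖lb‖ ^ 2)
      = ∑ i, (f i (x i) - f i (xstar i) + ⟪lb, g i (x i)⟫ - ⟪lb, g i (xstar i)⟫) := by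
        rw [inner_sum, inner_sum]
        rw [show ∀ A B C D : ℝ, (A + B - γ / 2 * ‖lb‖ ^ 2) - (C + D - γ / 2 * ‖lb‖ ^ 2)
            = (A - C) + (B - D) from fun A B C D => by ring]
        rw [← Finset.sum_sub_distrib, ← Finset.sum_sub_distrib, ← Finset.sum_add_distrib]
        apply Finset.sum_congr rfl
        intro i _
        ring
    _ ≤ ∑ i, (1 / (2 * α) * (‖x i - xstar i‖ ^ 2 - ‖xnext i - xstarnext i‖ ^ 2)
          + 2 * η * C₂ * ‖μ i - lb‖
          + (3 * η / α + C₂ * (1 + ‖μ i‖)) * ‖xstar i - xstarnext i‖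
          + α * C₂ ^ 2 * (1 + ‖μ i‖ ^ 2)) := Finset.sum_le_sum (fun i _ => key i)
    _ = 1 / (2 * α) * ∑ i, (‖x i - xstar i‖ ^ 2 - ‖xnext i - xstarnext i‖ ^ 2)
        + 2 * η * C₂ * ∑ i, ‖μ i - lb‖
        + ∑ i, (3 * η / α + C₂ * (1 + ‖μ i‖)) * ‖xstar i - xstarnext i‖
        + α * C₂ ^ 2 * ∑ i, (1 + ‖μ i‖ ^ 2) := by
        rw [Finset.mul_sum, Finset.mul_sum, Finset.mul_sum,
          ← Finset.sum_add_distrib, ← Finset.sum_add_distrib, ← Finset.sum_add_distrib]
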